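/- Let h be a dual quaternion with h·conj(h) = 1 and h + conj(h) = 0, and let p be a nonzero pure quaternion (p + conj(p) = 0). Then for n₁ := i - h and s₁ := -ε(i - h)p (with i the complex imaginary unit in the complexified dual quaternions), one has s₁·conj(n₁) + n₁·conj(s₁) = 0. -/

import Mathlib

open Quaternion TrivSqZeroExt

/-- The complexified dual quaternions. -/
instance : IsScalarTower ℂ ℍ[ℂ] ℍ[ℂ] := ⟨fun s a b => Algebra.smul_mul_assoc s a b⟩

instance : IsScalarTower ℂ ℍ[ℂ]ᵐᵒᵖ ℍ[ℂ] :=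
  ⟨fun s r m => by
    change m * (s • r.unop) = s • (m * r.unop)
    exact Algebra.mul_smul_comm s m r.unop⟩

noncomputable abbrev DHC := DualNumber (Quaternion ℂ)

/-- Dual quaternion conjugation (fixing the complex scalar unit and `ε`). -/
noncomputable def dconj (q : DHC) : DHC := (star q.fst, star q.snd)

/-- For a half-turn `h` (`h conj h = 1`, `h + conj h = 0`) and a nonzero pure
quaternion `p`, the elements `n₁ = i - h` and `s₁ = -ε (i - h) p` satisfy
`s₁ conj n₁ + n₁ conj s₁ = 0`. -/
theorem rp_null_line (h : DHC) (hn : h * dconj h = 1) (hp : h + dconj h = 0)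
    (p : Quaternion ℂ) (hpure : p + star p = 0) (hp0 : p ≠ 0) :
    (-(DualNumber.eps * ((algebraMap ℂ DHC Complex.I - h) * inl p))) *
          dconj (algebraMap ℂ DHC Complex.I - h) +
        (algebraMap ℂ DHC Complex.I - h) *
          dconj (-(DualNumber.eps * ((algebraMap ℂ DHC Complex.I - h) * inl p))) = 0 := by
  have hsp : star p = -p := eq_neg_of_add_eq_zero_right hpure
  have ha : star (TrivSqZeroExt.fst ((algebraMap ℂ DHC) Complex.I)) =
      TrivSqZeroExt.fst ((algebraMap ℂ DHC) Complex.I) := by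
    simp [TrivSqZeroExt.algebraMap_eq_inl', Quaternion.star_coe]
  have h0 : @star ℍ[ℂ] Quaternion.instStar 0 = 0 := star_zero _
  refine TrivSqZeroExt.ext ?_ ?_
  · simp [TrivSqZeroExt.fst_mul]; simp [dconj, h0]
  · simp only [TrivSqZeroExt.snd_add, TrivSqZeroExt.snd_mul, TrivSqZeroExt.fst_mul, TrivSqZeroExt.snd_neg, TrivSqZeroExt.fst_neg]
    simp only [dconj, TrivSqZeroExt.snd_add, TrivSqZeroExt.snd_mul, TrivSqZeroExt.fst_mul,
      TrivSqZeroExt.fst_neg, TrivSqZeroExt.snd_neg, TrivSqZeroExt.fst_sub, TrivSqZeroExt.snd_sub,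
      DualNumber.fst_eps, DualNumber.snd_eps, TrivSqZeroExt.fst_inl, TrivSqZeroExt.snd_inl,
      smul_eq_mul, op_smul_eq_mul, star_mul, star_neg, star_sub, star_add, star_zero, h0, star_one, hsp, ha,
      zero_mul, mul_zero, one_mul, zero_add, add_zero, neg_zero,
      TrivSqZeroExt.fst_mk, TrivSqZeroExt.snd_mk, TrivSqZeroExt.snd_zero]
    rw [star_neg ((TrivSqZeroExt.fst ((algebraMap ℂ DHC) Complex.I) - TrivSqZeroExt.fst h) * p),
      star_mul (TrivSqZeroExt.fst ((algebraMap ℂ DHC) Complex.I) - TrivSqZeroExt.fst h) p,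
      star_sub (TrivSqZeroExt.fst ((algebraMap ℂ DHC) Complex.I)) (TrivSqZeroExt.fst h), hsp, ha]
    generalize (TrivSqZeroExt.fst ((algebraMap ℂ DHC) Complex.I) : ℍ[ℂ]) = A
    generalize (TrivSqZeroExt.fst h : ℍ[ℂ]) = H
    generalize (star H : ℍ[ℂ]) = S
    simp only [neg_mul, mul_neg, neg_neg, mul_assoc, sub_mul, mul_sub, add_mul, mul_add, neg_add_rev, neg_sub,
      show ∀ x : ℍ[ℂ], -p * x = -(p * x) from fun x => neg_mul p x, mul_neg, neg_neg]
    abel
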